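/- Let T : W → V be a linear map between n-dimensional real inner product spaces with n ≥ 3, such that the vectors {Tε_i} are pairwise orthogonal for some orthonormal basis {ε_i} of W and |Tε_i ∧ Tε_j| = 1 for all i < j. Then |Tε_i| = 1 for every i, and hence T is a linear isometry. -/

import Mathlib

/-- If `{Tε_i}` are pairwise orthogonal for an orthonormal basis `{ε_i}` (with `n ≥ 3`)
and `|Tε_i ∧ Tε_j| = 1` for all `i < j`, then each `|Tε_i| = 1` and `T` is a linear
isometry.  The exterior square of `V` is modelled by a Gram-determinant wedge pairing. -/
theorem stmt_14 (n : ℕ) (hn : 3 ≤ n)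
    {W V LV : Type*}
    [NormedAddCommGroup W] [InnerProductSpace ℝ W]
    [NormedAddCommGroup V] [InnerProductSpace ℝ V]
    [NormedAddCommGroup LV] [InnerProductSpace ℝ LV]
    (hdimW : Module.finrank ℝ W = n) (hdimV : Module.finrank ℝ V = n)
    (wV : V →ₗ[ℝ] V →ₗ[ℝ] LV)
    (hVgram : ∀ u1 u2 v1 v2 : V, (inner ℝ (wV u1 u2) (wV v1 v2) : ℝ)
      = inner ℝ u1 v1 * inner ℝ u2 v2 - inner ℝ u1 v2 * inner ℝ u2 v1)
    (T : W →ₗ[ℝ] V)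
    (ε : OrthonormalBasis (Fin n) ℝ W)
    (horth : ∀ i j, i ≠ j → (inner ℝ (T (ε i)) (T (ε j)) : ℝ) = 0)
    (hunit : ∀ i j, i < j → ‖wV (T (ε i)) (T (ε j))‖ = 1) :
    (∀ i, ‖T (ε i)‖ = 1) ∧ ∀ x : W, ‖T x‖ = ‖x‖ := by
  -- product of norms is 1 for distinct indices
  have key : ∀ i j : Fin n, i ≠ j → ‖T (ε i)‖ * ‖T (ε j)‖ = 1 := by
    have base : ∀ i j : Fin n, i < j → ‖T (ε i)‖ * ‖T (ε j)‖ = 1 := by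
      intro i j hij
      have h1 : (inner ℝ (wV (T (ε i)) (T (ε j))) (wV (T (ε i)) (T (ε j))) : ℝ)
          = ‖T (ε i)‖ ^ 2 * ‖T (ε j)‖ ^ 2 := by
        rw [hVgram, horth i j hij.ne, real_inner_self_eq_norm_sq,
          real_inner_self_eq_norm_sq]
        ring
      have h2 : (inner ℝ (wV (T (ε i)) (T (ε j))) (wV (T (ε i)) (T (ε j))) : ℝ) = 1 := by
        rw [real_inner_self_eq_norm_sq, hunit i j hij]; norm_num
      have h3 : (‖T (ε i)‖ * ‖T (ε j)‖) ^ 2 = 1 ^ 2 := by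
        rw [mul_pow, h1.symm.trans h2]; norm_num
      have hx : 0 ≤ ‖T (ε i)‖ * ‖T (ε j)‖ :=
        mul_nonneg (norm_nonneg _) (norm_nonneg _)
      nlinarith [h3, hx]
    intro i j hij
    rcases hij.lt_or_gt with h | h
    · exact base i j h
    · rw [mul_comm]; exact base j i h
  have hnorm : ∀ i, ‖T (ε i)‖ = 1 := by
    intro i
    -- pick two other indices
    obtain ⟨j, k, hji, hki, hjk⟩ : ∃ j k : Fin n, j ≠ i ∧ k ≠ i ∧ j ≠ k := by
      have hcard : ({i} : Finset (Fin n))ᶜ.card = n - 1 := by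
        rw [Finset.card_compl]; simp
      obtain ⟨j, hj⟩ := Finset.card_pos.mp (by rw [hcard]; omega : 0 < ({i} : Finset (Fin n))ᶜ.card)
      have hcard2 : ({i, j} : Finset (Fin n))ᶜ.card ≠ 0 := by
        rw [Finset.card_compl]
        have := Finset.card_insert_le i ({j} : Finset (Fin n))
        simp only [Finset.card_singleton, Fintype.card_fin] at this ⊢
        omega
      obtain ⟨k, hk⟩ := Finset.card_pos.mp (Nat.pos_of_ne_zero hcard2)
      simp only [Finset.mem_compl, Finset.mem_insert, Finset.mem_singleton, not_or] at hj hk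
      exact ⟨j, k, hj, hk.1, fun h => hk.2 h.symm⟩
    have hij := key i j (Ne.symm hji)
    have hik := key i k (Ne.symm hki)
    have hjk' := key j k hjk
    nlinarith [norm_nonneg (T (ε i)), norm_nonneg (T (ε j)), norm_nonneg (T (ε k))]
  refine ⟨hnorm, ?_⟩
  have hon : Orthonormal ℝ (T ∘ ε.toBasis) := by
    rw [orthonormal_iff_ite]
    intro i j
    by_cases h : i = j
    · subst h
      simp only [Function.comp_apply, OrthonormalBasis.coe_toBasis, if_true]
      rw [real_inner_self_eq_norm_sq, hnorm]; norm_num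
    · simp only [Function.comp_apply, OrthonormalBasis.coe_toBasis, if_neg h]
      exact horth i j h
  intro x
  exact (T.isometryOfOrthonormal (by simp [ε.orthonormal] : Orthonormal ℝ (⇑ε.toBasis)) hon).norm_map x
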